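/- Let n ≥ 2 and let s_i denote the adjacent transposition (i, i+1) in the symmetric group S_n for 1 ≤ i ≤ n−1. For every bijection σ of {1,…,n−1}, the product c = s_{σ(1)} s_{σ(2)} ⋯ s_{σ(n−1)} is an n-cycle of the form (i_1, i_2, …, i_n) for some unimodal sequence i_1,…,i_n that is a permutation of 1,…,n; that is, there exist i_1,…,i_n, a rearrangement of 1,…,n, with i_1 < i_2 < … < i_k > i_{k+1} > … > i_n for some k, such that c(i_j) = i_{j+1} for 1 ≤ j < n and c(i_n) = i_1. -/

import Mathlib

open Equiv List
namespace Stmt16Aux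

abbrev T (i : ℕ) : Equiv.Perm ℕ := Equiv.swap i (i + 1)

lemma formPerm_append_pair (x m : ℕ) : ∀ (t : List ℕ),
    (t ++ [x, m]).formPerm = (t ++ [x]).formPerm * Equiv.swap x m
  | [] => by simp [List.formPerm_pair, List.formPerm_singleton]
  | [y] => by
      simp [List.formPerm_cons_cons, List.formPerm_pair, List.formPerm_singleton, mul_assoc]
  | y :: z :: t => by
      have ih := formPerm_append_pair x m (z :: t)
      simp only [List.cons_append] at ih ⊢
      rw [List.formPerm_cons_cons, List.formPerm_cons_cons, ih, mul_assoc]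

lemma insert_after (a b : List ℕ) (x m : ℕ) (h : (a ++ x :: m :: b).Nodup) :
    (a ++ x :: m :: b).formPerm = (a ++ x :: b).formPerm * Equiv.swap x m := by
  have hsub : (a ++ x :: b) <+ (a ++ x :: m :: b) :=
    ((List.sublist_cons_self m b).cons₂ x).append_left a
  have h2 : (a ++ x :: b).Nodup := h.sublist hsub
  have e1 : a ++ x :: m :: b = (a ++ [x, m]) ++ b := by simp
  have e2 : a ++ x :: b = (a ++ [x]) ++ b := by simp
  rw [e1] at h ⊢
  rw [e2] at h2 ⊢
  rw [← List.formPerm_rotate _ h (a ++ [x, m]).length,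
      ← List.formPerm_rotate _ h2 (a ++ [x]).length,
      List.rotate_append_length_eq, List.rotate_append_length_eq,
      ← List.append_assoc, ← List.append_assoc, formPerm_append_pair]

lemma insert_before (a b : List ℕ) (x m : ℕ) (h : (a ++ m :: x :: b).Nodup) :
    (a ++ m :: x :: b).formPerm = Equiv.swap x m * (a ++ x :: b).formPerm := by
  have hsub : (a ++ x :: b) <+ (a ++ m :: x :: b) :=
    (List.sublist_cons_self m (x :: b)).append_left a
  have h2 : (a ++ x :: b).Nodup := h.sublist hsub
  rw [← List.formPerm_rotate _ h a.length, ← List.formPerm_rotate _ h2 a.length]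
  rw [show (a ++ m :: x :: b).rotate a.length = (m :: x :: b) ++ a from
        List.rotate_append_length_eq a (m :: x :: b),
      show (a ++ x :: b).rotate a.length = (x :: b) ++ a from
        List.rotate_append_length_eq a (x :: b)]
  simp only [List.cons_append]
  rw [List.formPerm_cons_cons, Equiv.swap_comm]

lemma prod_fix (x : ℕ) : ∀ (l : List ℕ), (∀ i ∈ l, x ≠ i ∧ x ≠ i + 1) →
    ((l.map T).prod) x = x
  | [], _ => rfl
  | i :: l, h => by
      have h1 := h i (by simp)
      simp only [List.map_cons, List.prod_cons, Equiv.Perm.mul_apply]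
      rw [prod_fix x l (fun j hj => h j (by simp [hj])),
        Equiv.swap_apply_of_ne_of_ne h1.1 h1.2]

lemma commute_of_fix (g : Equiv.Perm ℕ) (x y : ℕ) (hx : g x = x) (hy : g y = y) :
    g * Equiv.swap x y = Equiv.swap x y * g := by
  have := Equiv.swap_apply_apply g x y
  rw [hx, hy] at this
  conv_rhs => rw [this]
  simp [mul_assoc]

lemma step_perm (n : ℕ) (l : List ℕ) (h : l ~ List.range (n + 1)) :
    (n + 1) :: l ~ List.range (n + 2) := by
  calc (n + 1) :: l ~ (n + 1) :: List.range (n + 1) := h.cons _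
    _ ~ List.range (n + 1) ++ [n + 1] := (List.perm_append_singleton _ _).symm
    _ = List.range (n + 2) := List.range_succ.symm

lemma core : ∀ (n : ℕ) (w : List ℕ), w ~ List.range n →
    ∃ a b : List ℕ,
      (a ++ n :: b) ~ List.range (n + 1) ∧
      a.Pairwise (· < ·) ∧ b.Pairwise (· > ·) ∧
      (w.map T).prod = (a ++ n :: b).formPerm := by
  intro n
  induction n with
  | zero =>
      intro w hw
      have hw0 : w = [] := by simpa using hw.eq_nil
      refine ⟨[], [], by simp [List.range_succ], by simp, by simp, ?_⟩
      rw [hw0]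
      simp [List.formPerm_singleton]
  | succ n ih =>
      intro w hw
      have hn : n ∈ w := hw.mem_iff.mpr (by simp)
      obtain ⟨p, q, rfl⟩ := List.append_of_mem hn
      have hpq : (p ++ q) ~ List.range n := by
        have h1 : n :: (p ++ q) ~ n :: List.range n := by
          calc n :: (p ++ q) ~ p ++ n :: q := List.perm_middle.symm
            _ ~ List.range (n + 1) := hw
            _ = List.range n ++ [n] := List.range_succ
            _ ~ n :: List.range n := List.perm_append_singleton _ _
        exact h1.cons_inv
      obtain ⟨a, b, hperm, ha, hb, hP⟩ := ih (p ++ q) hpq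
      have hpqnd : (p ++ q).Nodup := hpq.symm.nodup List.nodup_range
      have hplt : ∀ i ∈ p, i < n := fun i hi =>
        List.mem_range.mp (hpq.subset (by simp [hi]))
      have hqlt : ∀ i ∈ q, i < n := fun i hi =>
        List.mem_range.mp (hpq.subset (by simp [hi]))
      have hsnd : (a ++ n :: b).Nodup := hperm.symm.nodup List.nodup_range
      have hnab := List.nodup_append'.mp hsnd
      have halt : ∀ x ∈ a, x < n := by
        intro x hx
        have h1 : x < n + 1 := List.mem_range.mp (hperm.subset (by simp [hx]))
        have h2 : x ≠ n := by
          intro h; exact (hnab.2.2 hx (by simp [h])).elim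
        omega
      have hblt : ∀ x ∈ b, x < n := by
        intro x hx
        have h1 : x < n + 1 := List.mem_range.mp (hperm.subset (by simp [hx]))
        have h2 : n ∉ b := (List.nodup_cons.mp hnab.2.1).1
        have : x ≠ n := fun h => h2 (h ▸ hx)
        omega
      have hprod : ((p ++ n :: q).map T).prod
          = (p.map T).prod * (T n * (q.map T).prod) := by
        rw [List.map_append, List.prod_append, List.map_cons, List.prod_cons]
      by_cases hA : n - 1 ∈ p
      · -- insert n+1 after the peak n
        have hn1 : 1 ≤ n := by
          have := hplt _ hA; omega
        have hqfix : ∀ i ∈ q, (n ≠ i ∧ n ≠ i + 1) ∧ (n + 1 ≠ i ∧ n + 1 ≠ i + 1) := by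
          intro i hi
          have h1 : i < n := hqlt i hi
          have h2 : i ≠ n - 1 := by
            intro h
            exact (List.disjoint_of_nodup_append hpqnd hA (h ▸ hi)).elim
          omega
        have hfx : ((q.map T).prod) n = n :=
          prod_fix n q (fun i hi => (hqfix i hi).1)
        have hfy : ((q.map T).prod) (n + 1) = n + 1 :=
          prod_fix (n + 1) q (fun i hi => (hqfix i hi).2)
        have hperm' : (a ++ n :: (n + 1) :: b) ~ List.range (n + 2) := by
          have e : a ++ n :: (n + 1) :: b = (a ++ [n]) ++ (n + 1) :: b := by simp
          rw [e]
          calc (a ++ [n]) ++ (n + 1) :: b ~ (n + 1) :: ((a ++ [n]) ++ b) :=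
              List.perm_middle
            _ = (n + 1) :: (a ++ n :: b) := by simp
            _ ~ List.range (n + 2) := step_perm n _ hperm
        have hnd' : (a ++ n :: (n + 1) :: b).Nodup := hperm'.symm.nodup List.nodup_range
        refine ⟨a ++ [n], b, by simpa using hperm', ?_, hb, ?_⟩
        · rw [List.pairwise_append]
          exact ⟨ha, by simp, by simpa using halt⟩
        · have e : (a ++ [n]) ++ (n + 1) :: b = a ++ n :: (n + 1) :: b := by simp
          rw [e, insert_after a b n (n + 1) hnd', ← hP, hprod,
            List.map_append, List.prod_append, mul_assoc]
          congr 1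
          exact (commute_of_fix _ n (n + 1) hfx hfy).symm
      · -- insert n+1 before the peak n
        have hpfix : ∀ i ∈ p, (n ≠ i ∧ n ≠ i + 1) ∧ (n + 1 ≠ i ∧ n + 1 ≠ i + 1) := by
          intro i hi
          have h1 : i < n := hplt i hi
          have h2 : i ≠ n - 1 := fun h => hA (h ▸ hi)
          omega
        have hfx : ((p.map T).prod) n = n :=
          prod_fix n p (fun i hi => (hpfix i hi).1)
        have hfy : ((p.map T).prod) (n + 1) = n + 1 :=
          prod_fix (n + 1) p (fun i hi => (hpfix i hi).2)
        have hperm' : (a ++ (n + 1) :: n :: b) ~ List.range (n + 2) := by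
          calc a ++ (n + 1) :: n :: b ~ (n + 1) :: (a ++ n :: b) := List.perm_middle
            _ ~ List.range (n + 2) := step_perm n _ hperm
        have hnd' : (a ++ (n + 1) :: n :: b).Nodup := hperm'.symm.nodup List.nodup_range
        refine ⟨a, n :: b, hperm', ha, ?_, ?_⟩
        · rw [List.pairwise_cons]
          exact ⟨hblt, hb⟩
        · rw [insert_before a b n (n + 1) hnd', ← hP, hprod,
            List.map_append, List.prod_append, ← mul_assoc, ← mul_assoc]
          congr 1
          exact commute_of_fix _ n (n + 1) hfx hfy
lemma swap_val {n : ℕ} (a b x : Fin n) :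
    ((Equiv.swap a b x : Fin n) : ℕ) = Equiv.swap (a : ℕ) (b : ℕ) (x : ℕ) := by
  simp only [Equiv.swap_apply_def]
  split_ifs <;> simp_all [Fin.val_eq_val]

lemma prodval {n : ℕ} : ∀ (k : ℕ) (f : Fin k → Equiv.Perm (Fin n)) (g : Fin k → Equiv.Perm ℕ),
    (∀ (j : Fin k) (x : Fin n), ((f j x : Fin n) : ℕ) = g j (x : ℕ)) →
    ∀ x : Fin n, (((List.ofFn f).prod) x : ℕ) = ((List.ofFn g).prod) (x : ℕ)
  | 0, f, g, h, x => by simp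
  | k + 1, f, g, h, x => by
      rw [List.ofFn_succ, List.ofFn_succ, List.prod_cons, List.prod_cons]
      simp only [Equiv.Perm.mul_apply]
      rw [h 0, prodval k _ _ (fun j x => h j.succ x)]

lemma get_mid {x t : ℕ} (a b : List ℕ) (hte : t = a.length)
    (h2 : t < (a ++ x :: b).length) : (a ++ x :: b)[t]'h2 = x := by
  subst hte
  rw [List.getElem_append_right (le_refl _)]
  simp

lemma get_high {x t : ℕ} (a b : List ℕ) (ht : a.length < t)
    (h2 : t < (a ++ x :: b).length) :
    (a ++ x :: b)[t]'h2 = b[t - a.length - 1]'(by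
      simp only [List.length_append, List.length_cons] at h2; omega) := by
  rw [List.getElem_append_right (by omega : a.length ≤ t)]
  obtain ⟨d, hd⟩ : ∃ d, t - a.length = d + 1 := ⟨t - a.length - 1, by omega⟩
  simp only [hd]
  simp

end Stmt16Aux

open Stmt16Aux in
theorem stmt16 (n : ℕ) (hn : 2 ≤ n) (σ : Equiv.Perm (Fin (n - 1)))
    (c : Equiv.Perm (Fin n))
    (hc : c = (List.ofFn fun j : Fin (n - 1) =>
        Equiv.swap (⟨(σ j : ℕ), by have := (σ j).isLt; omega⟩ : Fin n)
          (⟨(σ j : ℕ) + 1, by have := (σ j).isLt; omega⟩ : Fin n)).prod) :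
    ∃ is : Fin n → Fin n, Function.Bijective is ∧
      (∃ k : Fin n,
        (∀ a b : Fin n, a < b → b ≤ k → is a < is b) ∧
        (∀ a b : Fin n, k ≤ a → a < b → is b < is a)) ∧
      ∀ j : Fin n, c (is j) = is (j + (⟨1, by omega⟩ : Fin n)) := by
  classical
  have hwperm : List.ofFn (fun j : Fin (n - 1) => ((σ j : ℕ))) ~ List.range (n - 1) := by
    have h2 : List.ofFn (fun i : Fin (n - 1) => (i : ℕ)) = List.range (n - 1) := by
      apply List.ext_getElem <;> simp
    rw [← h2]
    exact Equiv.Perm.ofFn_comp_perm σ Fin.val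
  obtain ⟨a, b, hperm, ha, hb, hP⟩ := core (n - 1) _ hwperm
  have hn1 : n - 1 + 1 = n := by omega
  rw [hn1] at hperm
  have hlen : (a ++ (n - 1) :: b).length = n := hperm.length_eq.trans List.length_range
  have hund : (a ++ (n - 1) :: b).Nodup := hperm.symm.nodup List.nodup_range
  have hult : ∀ x ∈ (a ++ (n - 1) :: b), x < n := fun x hx =>
    List.mem_range.mp (hperm.subset hx)
  have hnab := List.nodup_append'.mp hund
  have halt : ∀ x ∈ a, x < n - 1 := by
    intro x hx
    have h1 : x < n := hult x (by simp [hx])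
    have h2 : x ≠ n - 1 := fun h => (hnab.2.2 hx (by simp [h])).elim
    omega
  have hblt : ∀ x ∈ b, x < n - 1 := by
    intro x hx
    have h1 : x < n := hult x (by simp [hx])
    have h2 : (n - 1) ∉ b := (List.nodup_cons.mp hnab.2.1).1
    have : x ≠ n - 1 := fun h => h2 (h ▸ hx)
    omega
  have hval : ∀ x : Fin n, ((c x : Fin n) : ℕ) = (a ++ (n - 1) :: b).formPerm (x : ℕ) := by
    intro x
    rw [hc]
    have hptw : ∀ (j : Fin (n - 1)) (x : Fin n),
        (((Equiv.swap (⟨(σ j : ℕ), by have := (σ j).isLt; omega⟩ : Fin n)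
          (⟨(σ j : ℕ) + 1, by have := (σ j).isLt; omega⟩ : Fin n)) x : Fin n) : ℕ)
          = Equiv.swap ((σ j : ℕ)) ((σ j : ℕ) + 1) (x : ℕ) := by
      intro j x
      exact swap_val _ _ _
    rw [prodval (n - 1) _ (fun j => Equiv.swap ((σ j : ℕ)) ((σ j : ℕ) + 1)) hptw x]
    have hmap : List.ofFn (fun j : Fin (n - 1) => Equiv.swap ((σ j : ℕ)) ((σ j : ℕ) + 1))
        = (List.ofFn (fun j : Fin (n - 1) => ((σ j : ℕ)))).map T := by
      rw [List.map_ofFn]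
      rfl
    rw [hmap, hP]
  have hgetlt : ∀ j : Fin n, (j : ℕ) < (a ++ (n - 1) :: b).length := fun j => by
    rw [hlen]; exact j.isLt
  refine ⟨fun j => ⟨(a ++ (n - 1) :: b)[(j : ℕ)]'(hgetlt j),
      hult _ (List.getElem_mem _)⟩, ?_, ?_, ?_⟩
  · rw [← Finite.injective_iff_bijective]
    intro i j hij
    have := (Fin.mk.injEq _ _ _ _).mp hij
    exact Fin.ext ((hund.getElem_inj_iff).mp this)
  · -- unimodality
    have hka : a.length < n := by
      have : (a ++ (n - 1) :: b).length = a.length + (b.length + 1) := by simp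
      omega
    refine ⟨⟨a.length, hka⟩, ?_, ?_⟩
    · intro i j hij hjk
      simp only [Fin.mk_lt_mk, Fin.lt_def, Fin.le_def] at hij hjk ⊢
      have hja : (j : ℕ) ≤ a.length := hjk
      have hia : (i : ℕ) < a.length := by omega
      have hgi : (a ++ (n - 1) :: b)[(i : ℕ)]'(hgetlt i) = a[(i : ℕ)]'hia :=
        List.getElem_append_left hia
      rcases Nat.lt_or_ge (j : ℕ) a.length with hj | hj
      · have hgj : (a ++ (n - 1) :: b)[(j : ℕ)]'(hgetlt j) = a[(j : ℕ)]'hj :=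
          List.getElem_append_left hj
        rw [hgi, hgj]
        exact List.pairwise_iff_getElem.mp ha _ _ _ _ hij
      · have hje : (j : ℕ) = a.length := by omega
        have hgj : (a ++ (n - 1) :: b)[(j : ℕ)]'(hgetlt j) = n - 1 :=
          get_mid a b hje _
        rw [hgi, hgj]
        exact halt _ (List.getElem_mem _)
    · intro i j hki hij
      simp only [Fin.mk_lt_mk, Fin.lt_def, Fin.le_def] at hki hij ⊢
      have hbj : a.length < (j : ℕ) := by omega
      have hgj := get_high (x := n - 1) a b hbj (hgetlt j)
      rcases Nat.eq_or_lt_of_le hki with hke | hki'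
      · have hgi : (a ++ (n - 1) :: b)[(i : ℕ)]'(hgetlt i) = n - 1 :=
          get_mid a b hke.symm _
        rw [hgi, hgj]
        exact hblt _ (List.getElem_mem _)
      · have hgi := get_high (x := n - 1) a b hki' (hgetlt i)
        rw [hgi, hgj]
        exact List.pairwise_iff_getElem.mp hb _ _ _ _ (by omega)
  · -- the cycle property
    intro j
    apply Fin.ext
    rw [hval]
    simp only
    rw [List.formPerm_apply_getElem _ hund (j : ℕ) (hgetlt j)]
    have hidx : ((j : ℕ) + 1) % (a ++ (n - 1) :: b).length
        = (((j + (⟨1, by omega⟩ : Fin n)) : Fin n) : ℕ) := by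
      rw [Fin.val_add]
      simp only [hlen]
    simp only [hidx]
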